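/- arXiv:1903.02813 — 2 statements merged into one kernel-verified Lean document; each statement's English description precedes it below -/
import Mathlib

section
/- The Fock space 𝓕 is cyclic over the lowering operators: the smallest K-linear subspace of 𝓕 containing the vacuum vector |0⟩ (the basis vector indexed by the identically zero pyramid) and stable under the operators F_J for all real intervals J is 𝓕 itself. -/
noncomputable section
open Function
open scoped Classical

/-- The `ℕ`-valued indicator function of the interval `[a, b)`. -/
def ind (a b : ℝ) : ℝ → ℕ := (Set.Ico a b).indicator fun _ => 1

/-- A real pyramid: a function `p : ℝ → ℕ` vanishing outside a bounded set, maximal at `0`,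
nondecreasing on `(-∞, 0]`, nonincreasing on `[0, ∞)`, right-continuous and piecewise
constant with finitely many discontinuities, and with jumps of size at most 1
(`p₋(x)` is the left limit of `p` at `x`). -/
def IsRealPyramid (p : ℝ → ℕ) : Prop :=
  (∃ M : ℝ, ∀ x : ℝ, M ≤ |x| → p x = 0) ∧
  (∀ x, p x ≤ p 0) ∧
  (∀ ⦃x y : ℝ⦄, x ≤ y → y ≤ 0 → p x ≤ p y) ∧
  (∀ ⦃x y : ℝ⦄, 0 ≤ x → x ≤ y → p y ≤ p x) ∧
  (∀ x, ContinuousWithinAt p (Set.Ici x) x) ∧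
  {x : ℝ | ¬ ContinuousAt p x}.Finite ∧
  (∀ x, |(p x : ℤ) - ((Function.leftLim p x : ℕ) : ℤ)| ≤ 1)

/-- The interval `[a, b)` is addable for `p` if `p + 1_{[a,b)}` is again a real pyramid. -/
def Addable (p : ℝ → ℕ) (a b : ℝ) : Prop := IsRealPyramid (fun x => p x + ind a b x)

/-- The interval `[a, b)` is removable for `p` if `p ≥ 1` on `[a, b)` and `p − 1_{[a,b)}`
is again a real pyramid. -/
def Removable (p : ℝ → ℕ) (a b : ℝ) : Prop :=
  (∀ x ∈ Set.Ico a b, 1 ≤ p x) ∧ IsRealPyramid (fun x => p x - ind a b x)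

/-- `n_J(p)`: `1` if `J = [a,b)` is addable for `p`, `−1` if removable, `0` otherwise. -/
def nJ (p : ℝ → ℕ) (a b : ℝ) : ℤ :=
  if Addable p a b then 1 else if Removable p a b then -1 else 0

/-- The base field `K = ℚ(t)`. -/
abbrev K : Type := RatFunc ℚ

/-- The variable `t ∈ K` (playing the role of `υ^{1/2}`). -/
def tK : K := RatFunc.X

/-- The quantum parameter `v := t²`. -/
def vK : K := tK ^ 2

/-- The type of real pyramids. -/
def Pyr : Type := {p : ℝ → ℕ // IsRealPyramid p}

/-- The Fock space: the `K`-vector space with basis `|p⟩` indexed by real pyramids. -/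
abbrev Fock : Type := Pyr →₀ K

/-- `E_J |p⟩ = −t·(−v)^{p(b)−p(a)} |p − 1_J⟩` if `J = [a,b)` is removable for `p`,
and `0` otherwise. -/
def Evec (a b : ℝ) (p : Pyr) : Fock :=
  if h : Removable p.1 a b then
    Finsupp.single ⟨fun x => p.1 x - ind a b x, h.2⟩
      (-tK * (-vK) ^ ((p.1 b : ℤ) - (p.1 a : ℤ)))
  else 0

/-- `F_J |p⟩ = t·(−v)^{p(a)−p(b)} |p + 1_J⟩` if `J = [a,b)` is addable for `p`,
and `0` otherwise. -/
def Fvec (a b : ℝ) (p : Pyr) : Fock :=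
  if h : Addable p.1 a b then
    Finsupp.single ⟨fun x => p.1 x + ind a b x, h⟩
      (tK * (-vK) ^ ((p.1 a : ℤ) - (p.1 b : ℤ)))
  else 0

/-- The `K`-linear operator `E_J` on the Fock space. -/
def Eop (a b : ℝ) : Fock →ₗ[K] Fock :=
  Finsupp.lsum K fun p => LinearMap.toSpanSingleton K Fock (Evec a b p)

/-- The `K`-linear operator `F_J` on the Fock space. -/
def Fop (a b : ℝ) : Fock →ₗ[K] Fock :=
  Finsupp.lsum K fun p => LinearMap.toSpanSingleton K Fock (Fvec a b p)

/-- The `K`-linear operator `K_J` on the Fock space: `K_J |p⟩ = v^{n_J(p)} |p⟩`. -/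
def Kop (a b : ℝ) : Fock →ₗ[K] Fock :=
  Finsupp.lsum K fun p =>
    LinearMap.toSpanSingleton K Fock (Finsupp.single p (vK ^ (nJ p.1 a b)))

/-- The `K`-linear operator `K_J⁻¹` on the Fock space: `K_J⁻¹ |p⟩ = v^{−n_J(p)} |p⟩`. -/
def Kinvop (a b : ℝ) : Fock →ₗ[K] Fock :=
  Finsupp.lsum K fun p =>
    LinearMap.toSpanSingleton K Fock (Finsupp.single p (vK ^ (-nJ p.1 a b)))


open Set Topology Filter

lemma contAt_nat_iff (f : ℝ → ℕ) (x : ℝ) :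
    ContinuousAt f x ↔ ∀ᶠ y in 𝓝 x, f y = f x := by
  rw [ContinuousAt, show (𝓝 (f x)) = pure (f x) from congrFun (nhds_discrete ℕ) _,
    Filter.tendsto_pure]

lemma contWithinAt_nat_iff (f : ℝ → ℕ) (x : ℝ) :
    ContinuousWithinAt f (Set.Ici x) x ↔ ∀ᶠ y in 𝓝[≥] x, f y = f x := by
  rw [ContinuousWithinAt, show (𝓝 (f x)) = pure (f x) from congrFun (nhds_discrete ℕ) _,
    Filter.tendsto_pure]

lemma exists_left_const (f : ℝ → ℕ) (hf : {x : ℝ | ¬ ContinuousAt f x}.Finite) (x : ℝ) :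
    ∃ y < x, ∀ z ∈ Set.Ioo y x, f z = Function.leftLim f x := by
  classical
  set D := {x : ℝ | ¬ ContinuousAt f x} with hD
  obtain ⟨y, hyx, hy⟩ : ∃ y < x, ∀ d ∈ D, d < x → d ≤ y := by
    refine ⟨((insert (x-1) hf.toFinset).filter (fun z => z < x)).max' ⟨x - 1, ?_⟩, ?_, ?_⟩
    · simp
    · have := Finset.max'_mem ((insert (x-1) hf.toFinset).filter (fun z => z < x))
        ⟨x - 1, by simp⟩
      exact (Finset.mem_filter.1 this).2
    · intro d hd hdx
      refine Finset.le_max' _ _ ?_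
      rw [Finset.mem_filter]
      exact ⟨Finset.mem_insert_of_mem (hf.mem_toFinset.2 hd), hdx⟩
  have hcont : ContinuousOn f (Set.Ioo y x) := by
    intro z hz
    by_cases h : ContinuousAt f z
    · exact h.continuousWithinAt
    · exact absurd (hy z h hz.2) (not_le.2 hz.1)
  have hz0 : (y + x) / 2 ∈ Set.Ioo y x := ⟨by linarith, by linarith⟩
  have hconst : ∀ z ∈ Set.Ioo y x, f z = f ((y + x) / 2) :=
    fun z hz => (isPreconnected_Ioo).constant hcont hz hz0
  have hlim : Function.leftLim f x = f ((y + x) / 2) := by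
    refine leftLim_eq_of_tendsto ?_
    refine Filter.Tendsto.congr' ?_ tendsto_const_nhds
    filter_upwards [Ioo_mem_nhdsLT_of_mem (⟨hyx, le_rfl⟩ : x ∈ Set.Ioc y x)] with z hz
    exact (hconst z hz).symm
  exact ⟨y, hyx, fun z hz => by rw [hconst z hz, hlim]⟩

lemma exists_top_interval (p : ℝ → ℕ) (hp : IsRealPyramid p) (hpos : 0 < p 0) :
    ∃ a b : ℝ, a ≤ 0 ∧ 0 < b ∧ ∀ x, x ∈ Set.Ico a b ↔ p x = p 0 := by
  obtain ⟨⟨M, hM⟩, hmax, hmono, hanti, hrt, hfin, hjump⟩ := hp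
  set S : Set ℝ := {x | p x = p 0} with hS
  have hS0 : (0:ℝ) ∈ S := rfl
  have hSne : S.Nonempty := ⟨0, hS0⟩
  have hub : ∀ x ∈ S, x ≤ M := by
    intro x hx
    by_contra h
    have : p x = 0 := hM x (le_trans (le_of_lt (not_le.1 h)) (le_abs_self x))
    exact absurd (hx.symm.trans this) (by omega)
  have hlb : ∀ x ∈ S, -M ≤ x := by
    intro x hx
    by_contra h
    have : p x = 0 := hM x (le_of_lt (lt_of_lt_of_le (by linarith [not_le.1 h] : M < -x) (neg_le_abs x)))
    exact absurd (hx.symm.trans this) (by omega)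
  have hbdd : BddAbove S := ⟨M, hub⟩
  have hbddb : BddBelow S := ⟨-M, hlb⟩
  set a := sInf S with ha
  set b := sSup S with hb
  have ha0 : a ≤ 0 := csInf_le hbddb hS0
  have hb0 : 0 < b := by
    have h1 := (contWithinAt_nat_iff p 0).1 (hrt 0)
    obtain ⟨u, hu, hsub⟩ := mem_nhdsGE_iff_exists_Ico_subset.1 h1
    have hu0 : (0:ℝ) < u := hu
    have : u/2 ∈ S := hsub ⟨by linarith, by linarith⟩
    calc (0:ℝ) < u/2 := by linarith
    _ ≤ b := le_csSup hbdd this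
  have hmid : ∀ x, a < x → x < b → p x = p 0 := by
    intro x hax hxb
    rcases le_total x 0 with hx0 | hx0
    · obtain ⟨s, hsS, hsx⟩ := exists_lt_of_csInf_lt hSne hax
      exact le_antisymm (hmax x) (hsS ▸ hmono hsx.le hx0)
    · obtain ⟨s, hsS, hsx⟩ := exists_lt_of_lt_csSup hSne hxb
      exact le_antisymm (hmax x) (hsS ▸ hanti hx0 hsx.le)
  have hbS : p b ≠ p 0 := by
    intro h
    have h1 := (contWithinAt_nat_iff p b).1 (hrt b)
    obtain ⟨u, hu, hsub⟩ := mem_nhdsGE_iff_exists_Ico_subset.1 h1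
    have hbu : b < u := hu
    have : (b + u)/2 ∈ S := by
      have : p ((b+u)/2) = p b := hsub ⟨by linarith, by linarith⟩
      exact this.trans h
    linarith [le_csSup hbdd this]
  have haS : p a = p 0 := by
    have h1 := (contWithinAt_nat_iff p a).1 (hrt a)
    obtain ⟨u, hu, hsub⟩ := mem_nhdsGE_iff_exists_Ico_subset.1 h1
    have hau : a < u := hu
    have hab : a < b := lt_of_le_of_lt ha0 hb0
    set z := (a + min u b)/2 with hz
    have hz1 : a < z := by
      have : a < min u b := lt_min hau hab
      simp only [hz]; linarith
    have hz2 : z < u := by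
      have h2 : min u b ≤ u := min_le_left _ _
      have : a < min u b := lt_min hau hab
      simp only [hz]; linarith
    have hz3 : z < b := by
      have h2 : min u b ≤ b := min_le_right _ _
      have : a < min u b := lt_min hau hab
      simp only [hz]; linarith
    have := hsub ⟨hz1.le, hz2⟩
    rw [← this]
    exact hmid z hz1 hz3
  refine ⟨a, b, ha0, hb0, fun x => ⟨?_, ?_⟩⟩
  · rintro ⟨hax, hxb⟩
    rcases eq_or_lt_of_le hax with h | h
    · exact h ▸ haS
    · exact hmid x h hxb
  · intro hx
    have h1 : a ≤ x := csInf_le hbddb hx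
    have h2 : x ≤ b := le_csSup hbdd hx
    have h3 : x ≠ b := fun h => hbS (h ▸ hx)
    exact ⟨h1, lt_of_le_of_ne h2 h3⟩


lemma step_down (p : ℝ → ℕ) (hp : IsRealPyramid p) (hpos : 0 < p 0) :
    ∃ a b : ℝ, a < b ∧ IsRealPyramid (fun x => p x - ind a b x) ∧
      (fun x => (p x - ind a b x) + ind a b x) = p ∧
      (p 0 - ind a b 0) + 1 = p 0 := by
  obtain ⟨a, b, ha0, hb0, hiff⟩ := exists_top_interval p hp hpos
  obtain ⟨⟨M, hM⟩, hmax, hmono, hanti, hrt, hfin, hjump⟩ := hp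
  have hab : a < b := lt_of_le_of_lt ha0 hb0
  have hind : ∀ x, ind a b x = if x ∈ Set.Ico a b then 1 else 0 := fun x =>
    Set.indicator_apply _ _ _
  set q : ℝ → ℕ := fun x => p x - ind a b x with hqdef
  have hlt : ∀ x, x ∉ Set.Ico a b → p x < p 0 := fun x hx =>
    lt_of_le_of_ne (hmax x) (fun h => hx ((hiff x).2 h))
  have hq : ∀ x, q x = if x ∈ Set.Ico a b then p 0 - 1 else p x := by
    intro x
    by_cases h : x ∈ Set.Ico a b
    · simp only [hqdef, hind, h, if_true, (hiff x).1 h]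
    · simp only [hqdef, hind, h, if_false, Nat.sub_zero]
  have h0mem : (0:ℝ) ∈ Set.Ico a b := ⟨ha0, hb0⟩
  have hq0 : q 0 = p 0 - 1 := by rw [hq]; simp [h0mem]
  -- property 6
  have hqfin : {x : ℝ | ¬ ContinuousAt q x}.Finite := by
    refine Set.Finite.subset
      ((hfin.union (Set.finite_singleton a)).union (Set.finite_singleton b)) ?_
    intro x hx
    by_contra hmem
    simp only [Set.mem_union, Set.mem_setOf_eq, Set.mem_singleton_iff, not_or] at hmem
    obtain ⟨⟨hpx, hxa⟩, hxb⟩ := hmem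
    rw [not_not] at hpx
    refine hx ?_
    rw [contAt_nat_iff]
    have h1 := (contAt_nat_iff p x).1 hpx
    rcases lt_trichotomy x a with h | h | h
    · filter_upwards [h1, Iio_mem_nhds h] with y hpy hy
      have hyn : y ∉ Set.Ico a b := fun hm => absurd hm.1 (not_le.2 hy)
      have hxn : x ∉ Set.Ico a b := fun hm => absurd hm.1 (not_le.2 h)
      rw [hq, hq, if_neg hyn, if_neg hxn, hpy]
    · exact absurd h hxa
    · rcases lt_trichotomy x b with h2 | h2 | h2
      · filter_upwards [Ioo_mem_nhds h h2] with y hy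
        rw [hq, hq, if_pos ⟨hy.1.le, hy.2⟩, if_pos ⟨h.le, h2⟩]
      · exact absurd h2 hxb
      · filter_upwards [h1, Ioi_mem_nhds h2] with y hpy hy
        have hyn : y ∉ Set.Ico a b := fun hm => absurd hm.2 (not_lt.2 hy.le)
        have hxn : x ∉ Set.Ico a b := fun hm => absurd hm.2 (not_lt.2 h2.le)
        rw [hq, hq, if_neg hyn, if_neg hxn, hpy]
  refine ⟨a, b, hab, ⟨⟨M, ?_⟩, ?_, ?_, ?_, ?_, hqfin, ?_⟩, ?_, ?_⟩
  -- (1) vanishing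
  · intro x hx
    exact Nat.eq_zero_of_le_zero (le_trans (Nat.sub_le _ _) (hM x hx).le)
  -- (2) max at 0
  · intro x
    show q x ≤ q 0
    rw [hq x, hq 0, if_pos h0mem]
    by_cases h : x ∈ Set.Ico a b
    · rw [if_pos h]
    · rw [if_neg h]
      have := hlt x h
      omega
  -- (3) mono on (-∞,0]
  · intro x y hxy hy0
    show q x ≤ q y
    have hxb : x < b := lt_of_le_of_lt (hxy.trans hy0) hb0
    have hyb : y < b := lt_of_le_of_lt hy0 hb0
    rw [hq x, hq y]
    split_ifs with h1 h2 h2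
    · exact le_rfl
    · exact absurd ⟨h1.1.trans hxy, hyb⟩ h2
    · have := hlt x h1
      omega
    · exact hmono hxy hy0
  -- (4) anti on [0,∞)
  · intro x y hx0 hxy
    show q y ≤ q x
    have hax : a ≤ x := ha0.trans hx0
    have hay : a ≤ y := hax.trans hxy
    rw [hq x, hq y]
    split_ifs with h1 h2 h2
    · exact le_rfl
    · exact absurd ⟨hax, lt_of_le_of_lt hxy h1.2⟩ h2
    · have := hlt y h1
      omega
    · exact hanti hx0 hxy
  -- (5) right continuity
  · intro x
    show ContinuousWithinAt q (Set.Ici x) x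
    rw [contWithinAt_nat_iff]
    have h1 := (contWithinAt_nat_iff p x).1 (hrt x)
    rcases lt_or_ge x a with h | h
    · filter_upwards [h1, Ico_mem_nhdsGE_of_mem (⟨le_rfl, h⟩ : x ∈ Set.Ico x a)] with y hpy hy
      have hyn : y ∉ Set.Ico a b := fun hm => absurd hm.1 (not_le.2 hy.2)

      have hxn : x ∉ Set.Ico a b := fun hm => absurd hm.1 (not_le.2 h)
      show q y = q x
      rw [hq, hq, if_neg hyn, if_neg hxn, hpy]
    · rcases lt_or_ge x b with h2 | h2
      · filter_upwards [Ico_mem_nhdsGE_of_mem (⟨le_rfl, h2⟩ : x ∈ Set.Ico x b)] with y hy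
        have hym : y ∈ Set.Ico a b := ⟨h.trans hy.1, hy.2⟩
        have hxm : x ∈ Set.Ico a b := ⟨h, h2⟩
        show q y = q x
        rw [hq, hq, if_pos hym, if_pos hxm]
      · filter_upwards [h1, self_mem_nhdsWithin] with y hpy hy
        have hyn : y ∉ Set.Ico a b := fun hm => absurd hm.2 (not_lt.2 (h2.trans hy))
        have hxn : x ∉ Set.Ico a b := fun hm => absurd hm.2 (not_lt.2 h2)
        show q y = q x
        rw [hq, hq, if_neg hyn, if_neg hxn, hpy]
  -- (7) jumps
  · intro x
    show |(q x : ℤ) - ((Function.leftLim q x : ℕ) : ℤ)| ≤ 1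
    obtain ⟨y1, hy1, hc1⟩ := exists_left_const p hfin x
    obtain ⟨y2, hy2, hc2⟩ := exists_left_const q hqfin x
    have hjx := hjump x
    rw [abs_le] at hjx ⊢
    rcases le_or_gt x a with hxa | hxa
    · set z := (max y1 y2 + x)/2 with hz
      have hm : max y1 y2 < x := max_lt hy1 hy2
      have hz1 : y1 < z := by
        have := le_max_left y1 y2
        simp only [hz]; linarith
      have hz2 : y2 < z := by
        have := le_max_right y1 y2
        simp only [hz]; linarith
      have hzx : z < x := by simp only [hz]; linarith
      have hzn : z ∉ Set.Ico a b := fun hmem =>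
        absurd hmem.1 (not_le.2 (lt_of_lt_of_le hzx hxa))
      have hp_z : p z = Function.leftLim p x := hc1 z ⟨hz1, hzx⟩
      have hq_z : q z = Function.leftLim q x := hc2 z ⟨hz2, hzx⟩
      have hqz : q z = p z := by rw [hq, if_neg hzn]
      have hpz_lt : p z < p 0 := hlt z hzn
      rcases eq_or_lt_of_le hxa with heq | hlt'
      · have hxmem : x ∈ Set.Ico a b := ⟨heq.ge, heq ▸ hab⟩
        have hpx : p x = p 0 := (hiff x).1 hxmem
        have hqx : q x = p 0 - 1 := by rw [hq, if_pos hxmem]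
        rw [hqx, ← hq_z, hqz]
        rw [hpx, ← hp_z] at hjx
        omega
      · have hxn : x ∉ Set.Ico a b := fun hmem => absurd hmem.1 (not_le.2 hlt')
        have hqx : q x = p x := by rw [hq, if_neg hxn]
        rw [hqx, ← hq_z, hqz, hp_z]
        exact hjx
    · rcases le_or_gt x b with hxb | hxb
      · set z := (max (max y1 y2) a + x)/2 with hz
        have hm : max (max y1 y2) a < x := max_lt (max_lt hy1 hy2) hxa
        have hz1 : y1 < z := by
          have := (le_max_left y1 y2).trans (le_max_left _ a)
          simp only [hz]; linarith
        have hz2 : y2 < z := by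
          have := (le_max_right y1 y2).trans (le_max_left _ a)
          simp only [hz]; linarith
        have hza : a < z := by
          have := le_max_right (max y1 y2) a
          simp only [hz]; linarith
        have hzx : z < x := by simp only [hz]; linarith
        have hzmem : z ∈ Set.Ico a b := ⟨hza.le, lt_of_lt_of_le hzx hxb⟩
        have hp_z : p z = Function.leftLim p x := hc1 z ⟨hz1, hzx⟩
        have hq_z : q z = Function.leftLim q x := hc2 z ⟨hz2, hzx⟩
        have hqz : q z = p 0 - 1 := by rw [hq, if_pos hzmem]
        have hpz : p z = p 0 := (hiff z).1 hzmem
        rcases lt_or_ge x b with hxb' | hxb'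
        · have hxmem : x ∈ Set.Ico a b := ⟨hxa.le, hxb'⟩
          have hqx : q x = p 0 - 1 := by rw [hq, if_pos hxmem]
          rw [hqx, ← hq_z, hqz]
          omega
        · have hxn : x ∉ Set.Ico a b := fun hmem =>
            absurd hmem.2 (not_lt.2 hxb')
          have hqx : q x = p x := by rw [hq, if_neg hxn]
          have hpx_lt : p x < p 0 := hlt x hxn
          rw [hqx, ← hq_z, hqz]
          rw [← hp_z, hpz] at hjx
          omega
      · set z := (max (max y1 y2) b + x)/2 with hz
        have hm : max (max y1 y2) b < x := max_lt (max_lt hy1 hy2) hxb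
        have hz1 : y1 < z := by
          have := (le_max_left y1 y2).trans (le_max_left _ b)
          simp only [hz]; linarith
        have hz2 : y2 < z := by
          have := (le_max_right y1 y2).trans (le_max_left _ b)
          simp only [hz]; linarith
        have hzb : b < z := by
          have := le_max_right (max y1 y2) b
          simp only [hz]; linarith
        have hzx : z < x := by simp only [hz]; linarith
        have hzn : z ∉ Set.Ico a b := fun hmem => absurd hmem.2 (not_lt.2 hzb.le)
        have hxn : x ∉ Set.Ico a b := fun hmem =>
          absurd hmem.2 (not_lt.2 (hzb.trans hzx).le)
        have hp_z : p z = Function.leftLim p x := hc1 z ⟨hz1, hzx⟩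
        have hq_z : q z = Function.leftLim q x := hc2 z ⟨hz2, hzx⟩
        have hqz : q z = p z := by rw [hq, if_neg hzn]
        have hqx : q x = p x := by rw [hq, if_neg hxn]
        rw [hqx, ← hq_z, hqz, hp_z]
        exact hjx
  -- p = q + ind
  · funext x
    by_cases h : x ∈ Set.Ico a b
    · have h1 : 1 ≤ p x := by
        have := (hiff x).1 h
        omega
      simp only [hind, h, if_true]
      omega
    · simp only [hind, h, if_false]
      omega
  -- q 0 + 1 = p 0
  · have : ind a b 0 = 1 := by rw [hind, if_pos h0mem]
    rw [this]
    omega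

/-- The identically zero function is a real pyramid. -/
lemma isRealPyramid_zero : IsRealPyramid (fun _ => 0) := by
  refine ⟨⟨0, fun x _ => rfl⟩, fun x => le_rfl, fun x y _ _ => le_rfl, fun x y _ _ => le_rfl,
    fun x => continuous_const.continuousAt.continuousWithinAt, ?_, ?_⟩
  · convert Set.finite_empty
    ext x
    simp [continuous_const.continuousAt]
  · intro x
    rw [leftLim_eq_of_tendsto tendsto_const_nhds]
    simp

/-- The vacuum vector `|0⟩`, the basis vector indexed by the zero pyramid. -/
def vac : Fock := Finsupp.single ⟨fun _ => 0, isRealPyramid_zero⟩ 1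

/-- every `K`-linear subspace of the Fock space containing the vacuum
vector and stable under all the operators `F_J` is the whole Fock space; i.e. the Fock
space is cyclic over the lowering operators. -/
theorem fock_cyclic_over_F (W : Submodule K Fock)
    (hvac : vac ∈ W)
    (hF : ∀ a b : ℝ, a < b → ∀ x ∈ W, Fop a b x ∈ W) :
    W = ⊤ := by
  have ht : tK ≠ 0 := RatFunc.X_ne_zero
  have hv : vK ≠ 0 := pow_ne_zero 2 ht
  have key : ∀ n : ℕ, ∀ p : Pyr, p.1 0 = n → Finsupp.single p (1:K) ∈ W := by
    intro n
    induction n with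
    | zero =>
      intro p hp0
      have hzero : p = ⟨fun _ => 0, isRealPyramid_zero⟩ := by
        apply Subtype.ext
        funext x
        exact Nat.eq_zero_of_le_zero (hp0 ▸ p.2.2.1 x)
      rw [hzero]
      exact hvac
    | succ n ih =>
      intro p hp0
      have hpos : 0 < p.1 0 := by omega
      obtain ⟨a, b, hab, hq, heq, hq0⟩ := step_down p.1 p.2 hpos
      set P' : Pyr := ⟨fun x => p.1 x - ind a b x, hq⟩ with hP'
      have hP'0 : P'.1 0 = n := by
        have h2 : P'.1 0 = p.1 0 - ind a b 0 := rfl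
        omega
      have hin : Finsupp.single P' (1:K) ∈ W := ih P' hP'0
      have hadd : Addable P'.1 a b := by
        show IsRealPyramid (fun x => P'.1 x + ind a b x)
        rw [show (fun x => P'.1 x + ind a b x) = p.1 from heq]
        exact p.2
      have hcalc : Fop a b (Finsupp.single P' (1:K)) = Fvec a b P' := by
        simp only [Fop, Finsupp.lsum_single, LinearMap.toSpanSingleton_apply, one_smul]
      have hvecp : (⟨fun x => P'.1 x + ind a b x, hadd⟩ : Pyr) = p := Subtype.ext heq
      have hFv : Fvec a b P'
          = Finsupp.single p (tK * (-vK) ^ ((P'.1 a : ℤ) - (P'.1 b : ℤ))) := by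
        unfold Fvec
        rw [dif_pos hadd, hvecp]
      set c : K := tK * (-vK) ^ ((P'.1 a : ℤ) - (P'.1 b : ℤ)) with hc
      have hcne : c ≠ 0 := mul_ne_zero ht (zpow_ne_zero _ (neg_ne_zero.2 hv))
      have hmem : Finsupp.single p c ∈ W := by
        rw [← hFv, ← hcalc]
        exact hF a b hab _ hin
      have hone : Finsupp.single p (1:K) = c⁻¹ • Finsupp.single p c := by
        rw [Finsupp.smul_single, smul_eq_mul, inv_mul_cancel₀ hcne]
      rw [hone]
      exact W.smul_mem _ hmem
  rw [eq_top_iff]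
  intro f _
  induction f using Finsupp.induction_linear with
  | zero => exact W.zero_mem
  | add f g hf hg => exact W.add_mem (hf Submodule.mem_top) (hg Submodule.mem_top)
  | single p c =>
    have h1 := key (p.1 0) p rfl
    have h2 : Finsupp.single p c = c • Finsupp.single p (1:K) := by
      rw [Finsupp.smul_single, smul_eq_mul, mul_one]
    rw [h2]
    exact W.smul_mem _ h1
end
end

section
/- Let F be a field, v ∈ F a nonzero element, c a positive natural number, and let {1, 2, …, c} = A ⊔ R be a partition into two disjoint subsets. For h ∈ {1, …, c} set s(h) := (|A ∩ {h+1,…,c}| − |R ∩ {h+1,…,c}|) − (|A ∩ {1,…,h−1}| − |R ∩ {1,…,h−1}|) ∈ ℤ. Then (v − v⁻¹)·( Σ_{h∈A} v^{s(h)} − Σ_{h∈R} v^{s(h)} ) = v^{|A|−|R|} − v^{|R|−|A|}, where v^k for k ∈ ℤ denotes the k-th integer power of v in F. -/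
/-- The exponent `s(h)` associated with a partition `{1,…,c} = A ⊔ R`:
`(|A ∩ {h+1,…,c}| − |R ∩ {h+1,…,c}|) − (|A ∩ {1,…,h−1}| − |R ∩ {1,…,h−1}|)`. -/
def sExp (A R : Finset ℕ) (c h : ℕ) : ℤ :=
  (((A ∩ Finset.Icc (h + 1) c).card : ℤ) - ((R ∩ Finset.Icc (h + 1) c).card : ℤ)) -
    (((A ∩ Finset.Icc 1 (h - 1)).card : ℤ) - ((R ∩ Finset.Icc 1 (h - 1)).card : ℤ))

/-- Splitting lemma: for `S ⊆ Icc 1 c` and `h ≤ c`,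
`|S ∩ Icc (h+1) c| = |S| - |S ∩ Icc 1 h|`. -/
lemma card_split_aux (S : Finset ℕ) (c h : ℕ) (hS : S ⊆ Finset.Icc 1 c) (hh : h ≤ c) :
    ((S ∩ Finset.Icc (h + 1) c).card : ℤ) = (S.card : ℤ) - ((S ∩ Finset.Icc 1 h).card : ℤ) := by
  have hU : Finset.Icc 1 h ∪ Finset.Icc (h + 1) c = Finset.Icc 1 c := by
    ext x; simp [Finset.mem_Icc]; omega
  have hD : Disjoint (S ∩ Finset.Icc 1 h) (S ∩ Finset.Icc (h + 1) c) := by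
    apply Finset.disjoint_left.2
    intro x hx hx'
    simp [Finset.mem_Icc] at hx hx'
    omega
  have hSeq : (S ∩ Finset.Icc 1 h) ∪ (S ∩ Finset.Icc (h + 1) c) = S := by
    rw [← Finset.inter_union_distrib_left, hU]
    exact Finset.inter_eq_left.2 hS
  have := Finset.card_union_of_disjoint hD
  rw [hSeq] at this
  push_cast [this]
  ring

/-- Step lemma: if `1 ≤ h` and `h ∈ S`, then `|S ∩ Icc 1 h| = |S ∩ Icc 1 (h-1)| + 1`. -/
lemma card_step_mem (S : Finset ℕ) (h : ℕ) (hh : 1 ≤ h) (hmem : h ∈ S) :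
    ((S ∩ Finset.Icc 1 h).card : ℤ) = ((S ∩ Finset.Icc 1 (h - 1)).card : ℤ) + 1 := by
  have hins : S ∩ Finset.Icc 1 h = insert h (S ∩ Finset.Icc 1 (h - 1)) := by
    ext x
    simp only [Finset.mem_inter, Finset.mem_insert, Finset.mem_Icc]
    constructor
    · rintro ⟨hxS, hx1, hxh⟩
      rcases eq_or_lt_of_le hxh with rfl | hlt
      · exact Or.inl rfl
      · exact Or.inr ⟨hxS, hx1, by omega⟩
    · rintro (rfl | ⟨hxS, hx1, hxh⟩)
      · exact ⟨hmem, hh, le_refl _⟩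
      · exact ⟨hxS, hx1, by omega⟩
  rw [hins, Finset.card_insert_of_notMem (by simp [Finset.mem_Icc]; omega)]
  push_cast
  ring

/-- Step lemma: if `h ∉ S`, then `|S ∩ Icc 1 h| = |S ∩ Icc 1 (h-1)|` for `1 ≤ h`. -/
lemma card_step_not_mem (S : Finset ℕ) (h : ℕ) (hh : 1 ≤ h) (hmem : h ∉ S) :
    (S ∩ Finset.Icc 1 h) = (S ∩ Finset.Icc 1 (h - 1)) := by
  ext x
  simp only [Finset.mem_inter, Finset.mem_Icc]
  constructor
  · rintro ⟨hxS, hx1, hxh⟩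
    refine ⟨hxS, hx1, ?_⟩
    rcases eq_or_lt_of_le hxh with rfl | hlt
    · exact absurd hxS hmem
    · omega
  · rintro ⟨hxS, hx1, hxh⟩
    exact ⟨hxS, hx1, by omega⟩

lemma zpow_key {F : Type*} [Field F] (v : F) (hv : v ≠ 0) (k : ℤ) :
    (v - v⁻¹) * v ^ (k + 1) = v ^ (k + 2) - v ^ k := by
  rw [sub_mul]
  congr 1
  · rw [mul_comm, ← zpow_add_one₀ hv]; congr 1; ring
  · rw [mul_comm, ← zpow_sub_one₀ hv]; congr 1; ring

/-- for a field `F`, `v ≠ 0`, `c > 0`, and a partition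
`{1,…,c} = A ⊔ R`, one has
`(v − v⁻¹)·(Σ_{h∈A} v^{s(h)} − Σ_{h∈R} v^{s(h)}) = v^{|A|−|R|} − v^{|R|−|A|}`. -/
theorem combinatorial_identity {F : Type*} [Field F] (v : F) (hv : v ≠ 0)
    (c : ℕ) (hc : 0 < c) (A R : Finset ℕ)
    (hdisj : Disjoint A R) (hunion : A ∪ R = Finset.Icc 1 c) :
    (v - v⁻¹) * ((∑ h ∈ A, v ^ sExp A R c h) - ∑ h ∈ R, v ^ sExp A R c h) =
      v ^ ((A.card : ℤ) - (R.card : ℤ)) - v ^ ((R.card : ℤ) - (A.card : ℤ)) := by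
  classical
  set N : ℤ := (A.card : ℤ) - (R.card : ℤ) with hN
  set t : ℕ → ℤ := fun h =>
    ((A ∩ Finset.Icc 1 h).card : ℤ) - ((R ∩ Finset.Icc 1 h).card : ℤ) with ht
  set f : ℕ → F := fun h => v ^ (N - 2 * t h) with hf
  have hAsub : A ⊆ Finset.Icc 1 c := hunion ▸ Finset.subset_union_left
  have hRsub : R ⊆ Finset.Icc 1 c := hunion ▸ Finset.subset_union_right
  -- key pointwise identities
  have hA : ∀ h ∈ A, (v - v⁻¹) * v ^ sExp A R c h = f (h - 1) - f h := by
    intro h hhA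
    have hIcc : h ∈ Finset.Icc 1 c := hAsub hhA
    simp only [Finset.mem_Icc] at hIcc
    have hhR : h ∉ R := Finset.disjoint_left.1 hdisj hhA
    have e1 := card_split_aux A c h hAsub hIcc.2
    have e2 := card_split_aux R c h hRsub hIcc.2
    have e3 := card_step_mem A h hIcc.1 hhA
    have e4 := card_step_not_mem R h hIcc.1 hhR
    have hs : sExp A R c h = (N - 2 * t h) + 1 := by
      simp only [sExp, ht, hN, e1, e2, e3, e4]
      ring
    have hstep : t h = t (h - 1) + 1 := by
      simp only [ht, e3, e4]; ring
    rw [hs, zpow_key v hv]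
    simp only [hf, hstep]
    have h2 : N - 2 * (t (h - 1) + 1) + 2 = N - 2 * t (h - 1) := by ring
    rw [h2]
  have hR : ∀ h ∈ R, (v - v⁻¹) * v ^ sExp A R c h = -(f (h - 1) - f h) := by
    intro h hhR
    have hIcc : h ∈ Finset.Icc 1 c := hRsub hhR
    simp only [Finset.mem_Icc] at hIcc
    have hhA : h ∉ A := Finset.disjoint_right.1 hdisj hhR
    have e1 := card_split_aux A c h hAsub hIcc.2
    have e2 := card_split_aux R c h hRsub hIcc.2
    have e3 := card_step_mem R h hIcc.1 hhR
    have e4 := card_step_not_mem A h hIcc.1 hhA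
    have hs : sExp A R c h = (N - 2 * t (h - 1)) + 1 := by
      simp only [sExp, ht, hN, e1, e2, e3, e4]
      ring
    have hstep : t h = t (h - 1) - 1 := by
      simp only [ht, e3, e4]; ring
    rw [hs, zpow_key v hv]
    simp only [hf, hstep]
    have h2 : N - 2 * (t (h - 1) - 1) = N - 2 * t (h - 1) + 2 := by ring
    rw [h2]
    ring
  -- rewrite LHS as a telescoping sum
  have key : (v - v⁻¹) * ((∑ h ∈ A, v ^ sExp A R c h) - ∑ h ∈ R, v ^ sExp A R c h)
      = ∑ h ∈ Finset.Icc 1 c, (f (h - 1) - f h) := by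
    rw [mul_sub, Finset.mul_sum, Finset.mul_sum]
    rw [Finset.sum_congr rfl hA, Finset.sum_congr rfl hR]
    rw [← hunion, Finset.sum_union hdisj, Finset.sum_neg_distrib]
    ring
  rw [key]
  -- telescoping
  have htel : ∑ h ∈ Finset.Icc 1 c, (f (h - 1) - f h) = f 0 - f c := by
    have : Finset.Icc 1 c = Finset.Ico 1 (c + 1) := by
      ext x; simp [Finset.mem_Icc, Finset.mem_Ico]
    rw [this, Finset.sum_Ico_eq_sum_range]
    simp only [Nat.add_sub_cancel]
    have : ∀ i ∈ Finset.range c, f (1 + i - 1) - f (1 + i) = f i - f (i + 1) := by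
      intro i _; congr 2 <;> omega
    rw [Finset.sum_congr rfl this, Finset.sum_range_sub' f]
  rw [htel]
  -- compute f 0 and f c
  have ht0 : t 0 = 0 := by simp [ht]
  have htc : t c = N := by
    have hA' : A ∩ Finset.Icc 1 c = A := Finset.inter_eq_left.2 hAsub
    have hR' : R ∩ Finset.Icc 1 c = R := Finset.inter_eq_left.2 hRsub
    simp [ht, hA', hR', hN]
  have hf0 : f 0 = v ^ N := by simp only [hf, ht0]; norm_num
  have hfc : f c = v ^ ((R.card : ℤ) - (A.card : ℤ)) := by
    simp only [hf, htc]
    congr 1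
    rw [hN]; ring
  rw [hf0, hfc]
end
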